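/- For every n, every weakly rainbow-stable 2-bounded coloring f : [ℕ]² → ℕ, and every finite increasing string σ that is a finite prerainbow for f (no two entries eventually share colors), there are at most |σ| natural numbers x such that appending x to σ destroys the prerainbow property; hence σ has infinitely many one-point prerainbow extensions. -/

import Mathlib

open Classical Filter

noncomputable section


/-- For a weakly rainbow-stable 2-bounded coloring, a finite increasing
prerainbow has at most `|σ|` bad one-point extensions, hence infinitely many
good ones. -/
theorem stmt18 (f : Sym2 ℕ → ℕ)
    (h2b : ∀ c : ℕ, {p : Sym2 ℕ | ¬ p.IsDiag ∧ f p = c}.encard ≤ 2)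
    (hws : ∀ x y : ℕ,
      (∀ᶠ s in atTop, f (Sym2.mk x s) = f (Sym2.mk y s)) ∨
      (∀ᶠ s in atTop, f (Sym2.mk x s) ≠ f (Sym2.mk y s)))
    (σ : List ℕ) (hσ : List.Pairwise (· < ·) σ)
    (hpre : ∀ x ∈ σ, ∀ y ∈ σ, x ≠ y →
      ∀ᶠ s in atTop, f (Sym2.mk x s) ≠ f (Sym2.mk y s)) :
    {x : ℕ | ∃ y ∈ σ, y ≠ x ∧
      ∀ᶠ s in atTop, f (Sym2.mk y s) = f (Sym2.mk x s)}.encard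
        ≤ (σ.length : ℕ∞) ∧
    {x : ℕ | List.Pairwise (· < ·) (σ ++ [x]) ∧
      ∀ a ∈ σ ++ [x], ∀ b ∈ σ ++ [x], a ≠ b →
        ∀ᶠ s in atTop, f (Sym2.mk a s) ≠ f (Sym2.mk b s)}.Infinite := by
  set bad := {x : ℕ | ∃ y ∈ σ, y ≠ x ∧
      ∀ᶠ s in atTop, f (Sym2.mk y s) = f (Sym2.mk x s)} with hbaddef
  -- Key fact: each y has at most one partner x with eventual color agreement.
  have key : ∀ y x1 x2 : ℕ, y ≠ x1 → y ≠ x2 →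
      (∀ᶠ s in atTop, f (Sym2.mk y s) = f (Sym2.mk x1 s)) →
      (∀ᶠ s in atTop, f (Sym2.mk y s) = f (Sym2.mk x2 s)) → x1 = x2 := by
    intro y x1 x2 hy1 hy2 h1 h2
    by_contra hne
    obtain ⟨s, hs1, hs2, hsy, hsx1, hsx2⟩ :=
      (h1.and (h2.and ((eventually_gt_atTop y).and
        ((eventually_gt_atTop x1).and (eventually_gt_atTop x2))))).exists
    set c := f (Sym2.mk y s) with hc
    have d01 : Sym2.mk y s ≠ Sym2.mk x1 s := by rw [Ne, Sym2.eq_iff]; omega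
    have d02 : Sym2.mk y s ≠ Sym2.mk x2 s := by rw [Ne, Sym2.eq_iff]; omega
    have d12 : Sym2.mk x1 s ≠ Sym2.mk x2 s := by rw [Ne, Sym2.eq_iff]; omega
    have hsub : ({Sym2.mk y s, Sym2.mk x1 s, Sym2.mk x2 s} : Set (Sym2 ℕ))
        ⊆ {p : Sym2 ℕ | ¬ p.IsDiag ∧ f p = c} := by
      intro p hp
      rcases hp with h | h | h <;> subst h <;>
        refine ⟨by simp only [Sym2.mk_isDiag_iff]; omega, ?_⟩
      · exact hc.symm
      · exact hs1.symm
      · exact hs2.symm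
    have h3 : ({Sym2.mk y s, Sym2.mk x1 s, Sym2.mk x2 s} : Set (Sym2 ℕ)).encard
        = 3 := by
      rw [Set.encard_insert_of_notMem (by simp [d01, d02]),
        Set.encard_insert_of_notMem (by simp [d12]), Set.encard_singleton]
      rfl
    have := le_trans (h3 ▸ Set.encard_mono hsub) (h2b c)
    norm_num at this
  have hle : bad.encard ≤ (σ.length : ℕ∞) := by
    have hw : ∀ x ∈ bad, ∃ y, y ∈ σ ∧ y ≠ x ∧
        ∀ᶠ s in atTop, f (Sym2.mk y s) = f (Sym2.mk x s) := by
      intro x hx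
      obtain ⟨y, hy, hyx, he⟩ := hx
      exact ⟨y, hy, hyx, he⟩
    set w : ℕ → ℕ := fun x => if h : x ∈ bad then (hw x h).choose else 0 with hwdef
    have hwspec : ∀ x (h : x ∈ bad), (w x) ∈ σ ∧ (w x) ≠ x ∧
        ∀ᶠ s in atTop, f (Sym2.mk (w x) s) = f (Sym2.mk x s) := by
      intro x h
      simp only [hwdef, dif_pos h]
      exact (hw x h).choose_spec
    have hinj : Set.InjOn w bad := by
      intro x1 h1 x2 h2 heq
      obtain ⟨hm1, hne1, he1⟩ := hwspec x1 h1
      obtain ⟨hm2, hne2, he2⟩ := hwspec x2 h2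
      exact key (w x1) x1 x2 hne1 (heq ▸ hne2) he1 (heq ▸ he2)
    calc bad.encard = (w '' bad).encard := (hinj.encard_image).symm
      _ ≤ ({y : ℕ | y ∈ σ} : Set ℕ).encard := by
          apply Set.encard_mono
          rintro _ ⟨x, hx, rfl⟩
          exact (hwspec x hx).1
      _ ≤ (σ.length : ℕ∞) := by
          have : ({y : ℕ | y ∈ σ} : Set ℕ) = ↑σ.toFinset := by
            ext y; simp
          rw [this, Set.encard_coe_eq_coe_finsetCard]
          exact_mod_cast σ.toFinset_card_le
  refine ⟨hle, ?_⟩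
  have hbadfin : bad.Finite := by
    rw [← Set.encard_ne_top_iff]
    intro htop
    rw [htop] at hle
    exact (lt_irrefl _ (lt_of_le_of_lt hle (WithTop.coe_lt_top _)))
  set B := σ.toFinset.sup id with hBdef
  have hB : ∀ y ∈ σ, y ≤ B := fun y hy =>
    Finset.le_sup (f := id) (List.mem_toFinset.mpr hy)
  have hgood : (Set.Ioi B \ bad) ⊆ {x : ℕ | List.Pairwise (· < ·) (σ ++ [x]) ∧
      ∀ a ∈ σ ++ [x], ∀ b ∈ σ ++ [x], a ≠ b →
        ∀ᶠ s in atTop, f (Sym2.mk a s) ≠ f (Sym2.mk b s)} := by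
    rintro x ⟨hxB, hxbad⟩
    have hxB' : B < x := hxB
    have hlt : ∀ y ∈ σ, y < x := fun y hy => lt_of_le_of_lt (hB y hy) hxB'
    have hne : ∀ y ∈ σ, y ≠ x := fun y hy => ne_of_lt (hlt y hy)
    have hgoodpair : ∀ y ∈ σ,
        ∀ᶠ s in atTop, f (Sym2.mk y s) ≠ f (Sym2.mk x s) := by
      intro y hy
      rcases hws y x with he | hne'
      · exact absurd ⟨y, hy, hne y hy, he⟩ hxbad
      · exact hne'
    constructor
    · rw [List.pairwise_append]
      refine ⟨hσ, List.pairwise_singleton _ _, ?_⟩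
      intro a ha b hb
      rw [List.mem_singleton] at hb
      subst hb
      exact hlt a ha
    · intro a ha b hb hab
      rw [List.mem_append, List.mem_singleton] at ha hb
      rcases ha with ha | rfl <;> rcases hb with hb | rfl
      · exact hpre a ha b hb hab
      · exact hgoodpair a ha
      · exact (hgoodpair b hb).mono fun s hs he => hs he.symm
      · exact absurd rfl hab
  exact ((Set.Ioi_infinite B).diff hbadfin).mono hgood

end
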